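/- arXiv:1602.01991 — 5 statements merged into one kernel-verified Lean document; each statement's English description precedes it below -/
import Mathlib

section
/- Let n > 0 be real and m ∈ ℂ with |m|² ≤ n(n+1). Define the 1×2 complex matrices U = [√(n+1−|m|²/n), m/√n] and V = [0, √n]. Then U U* = 1 + V V* and U V^⊤ = V U^⊤ (so (U, V) satisfies the single-mode Bogoliubov conditions), and moreover V^# V^⊤ = n and U V^⊤ = m; that is, applying this Bogoliubov transformation to two vacuum modes produces a single mode with covariance data N = n and M = m. -/
open scoped Matrix

/-- **A single Gaussian mode with covariance data `(n, m)` from two vacuum modes.**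
For `n > 0` and `m : ℂ` with `|m|² ≤ n (n + 1)`, the `1 × 2` matrices
`U = [√(n + 1 − |m|²/n), m/√n]` and `V = [0, √n]` satisfy the Bogoliubov conditions
`U Uᴴ = 1 + V Vᴴ` and `U Vᵀ = V Uᵀ`, and produce the covariance data
`N = (V^# Vᵀ)₀₀ = n` and `M = (U Vᵀ)₀₀ = m`. -/
theorem single_mode_from_two_vacuum_modes (n : ℝ) (hn : 0 < n) (m : ℂ)
    (hm : ‖m‖ ^ 2 ≤ n * (n + 1))
    (U V : Matrix (Fin 1) (Fin 2) ℂ)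
    (hU : U = !![(Real.sqrt (n + 1 - ‖m‖ ^ 2 / n) : ℂ), m / (Real.sqrt n : ℂ)])
    (hV : V = !![0, (Real.sqrt n : ℂ)]) :
    U * Uᴴ = 1 + V * Vᴴ ∧ U * Vᵀ = V * Uᵀ ∧
    (V.map (starRingEnd ℂ) * Vᵀ) 0 0 = (n : ℂ) ∧
    (U * Vᵀ) 0 0 = m := by
  have hsn : (Real.sqrt n : ℂ) ≠ 0 := by
    exact_mod_cast Complex.ofReal_ne_zero.mpr (ne_of_gt (Real.sqrt_pos.mpr hn))
  have hsq : (Real.sqrt n : ℂ) * (Real.sqrt n : ℂ) = (n : ℂ) := by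
    rw [← Complex.ofReal_mul, Real.mul_self_sqrt hn.le]
  have harg : 0 ≤ n + 1 - ‖m‖ ^ 2 / n := by
    rw [sub_nonneg, div_le_iff₀ hn]
    linarith
  have hsq2 : (Real.sqrt (n + 1 - ‖m‖ ^ 2 / n) : ℂ) *
      (Real.sqrt (n + 1 - ‖m‖ ^ 2 / n) : ℂ)
      = ((n : ℂ) + 1 - (‖m‖ ^ 2 : ℝ) / n) := by
    rw [← Complex.ofReal_mul, Real.mul_self_sqrt harg]
    push_cast
    ring
  have habs : ((‖m‖ : ℝ) : ℂ) ^ 2 = m * (starRingEnd ℂ) m := by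
    rw [Complex.mul_conj, ← Complex.sq_norm]
    push_cast
    ring
  subst hU hV
  refine ⟨?_, ?_, ?_, ?_⟩
  · ext i j
    fin_cases i; fin_cases j
    simp [Matrix.mul_apply, Fin.sum_univ_two, Matrix.one_apply, div_mul_eq_mul_div,
      Complex.conj_ofReal, map_div₀, hsq2, Matrix.vecMul, dotProduct,
      Matrix.vecHead, Matrix.vecTail]
    rw [hsq]
    have hn' : (n : ℂ) ≠ 0 := by exact_mod_cast hn.ne'
    have hsq' : (Real.sqrt n : ℂ) ^ 2 = (n : ℂ) := by rw [sq, hsq]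
    field_simp [hsq']
    linear_combination (-(n : ℂ)) * habs - ((‖m‖ : ℝ) : ℂ) ^ 2 * hsq'
  · ext i j
    fin_cases i; fin_cases j
    simp [Matrix.mul_apply, Fin.sum_univ_two]
    ring
  · simp [Matrix.mul_apply, Fin.sum_univ_two, Complex.conj_ofReal, hsq]
  · simp [Matrix.mul_apply, Fin.sum_univ_two, div_mul_cancel₀ m hsn]
end

section
/- Let L_1, …, L_d be bounded operators and H a bounded self-adjoint operator on a complex Hilbert space, let n be a d×d complex matrix, and let m be a symmetric d×d complex matrix (m_{ij} = m_{ji}). Define, for any bounded operator X, 𝓛X = (1/2) Σ_k L_k*[X, L_k] + (1/2) Σ_k [L_k*, X] L_k − i[X, H] and 𝓛^{(N,M)}X = (1/2) Σ_{i,j} (δ_{ij} + n_{ji}) { L_i*[X, L_j] + [L_i*, X] L_j } + (1/2) Σ_{i,j} n_{ij} { L_i[X, L_j*] + [L_i, X] L_j* } − (1/2) Σ_{i,j} m_{ij} { L_i*[X, L_j*] + [L_i*, X] L_j* } − (1/2) Σ_{i,j} conj(m_{ji}) { L_i[X, L_j] + [L_i, X] L_j } − i[X, H]. Then for every bounded operator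 X: 𝓛^{(N,M)}X = 𝓛X + (1/2) Σ_{i,j} n_{ji} ( [L_i*, [X, L_j]] + [[L_i*, X], L_j] ) + (1/2) Σ_{i,j} m_{ij} [L_j*, [L_i*, X]] + (1/2) Σ_{i,j} conj(m_{ij}) [[X, L_i], L_j]. -/
/-- **Representation-free form: the Gaussian Lindbladian versus the vacuum Lindbladian.**
For bounded couplings `L k`, bounded self-adjoint `H`, a matrix `n` and a symmetric matrix `m`,
the Gaussian Lindblad generator `𝓛^{(N,M)}` equals the vacuum Lindblad generator `𝓛` plus the
double-commutator Wick–Stratonovich corrections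
`½ Σ n_{ji} ([L_i*, [X, L_j]] + [[L_i*, X], L_j]) + ½ Σ m_{ij} [L_j*, [L_i*, X]]
+ ½ Σ conj(m_{ij}) [[X, L_i], L_j]`. -/
theorem gaussian_lindbladian_eq_vacuum_plus_corrections
    {𝓗 : Type*} [NormedAddCommGroup 𝓗] [InnerProductSpace ℂ 𝓗] [CompleteSpace 𝓗]
    {d : ℕ} (L : Fin d → 𝓗 →L[ℂ] 𝓗) (H : 𝓗 →L[ℂ] 𝓗) (hH : IsSelfAdjoint H)
    (n m : Matrix (Fin d) (Fin d) ℂ) (hm : ∀ i j, m i j = m j i)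
    (𝓛 𝓛NM : (𝓗 →L[ℂ] 𝓗) → (𝓗 →L[ℂ] 𝓗))
    (h𝓛 : ∀ X, 𝓛 X = (1/2 : ℂ) • ∑ k, star (L k) * ⁅X, L k⁆
      + (1/2 : ℂ) • ∑ k, ⁅star (L k), X⁆ * L k - Complex.I • ⁅X, H⁆)
    (h𝓛NM : ∀ X, 𝓛NM X =
      (1/2 : ℂ) • ∑ i, ∑ j, ((if i = j then 1 else 0) + n j i) •
          (star (L i) * ⁅X, L j⁆ + ⁅star (L i), X⁆ * L j)
      + (1/2 : ℂ) • ∑ i, ∑ j, n i j • (L i * ⁅X, star (L j)⁆ + ⁅L i, X⁆ * star (L j))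
      - (1/2 : ℂ) • ∑ i, ∑ j, m i j •
          (star (L i) * ⁅X, star (L j)⁆ + ⁅star (L i), X⁆ * star (L j))
      - (1/2 : ℂ) • ∑ i, ∑ j, (starRingEnd ℂ (m j i)) • (L i * ⁅X, L j⁆ + ⁅L i, X⁆ * L j)
      - Complex.I • ⁅X, H⁆) :
    ∀ X : 𝓗 →L[ℂ] 𝓗, 𝓛NM X = 𝓛 X
      + (1/2 : ℂ) • ∑ i, ∑ j, n j i • (⁅star (L i), ⁅X, L j⁆⁆ + ⁅⁅star (L i), X⁆, L j⁆)
      + (1/2 : ℂ) • ∑ i, ∑ j, m i j • ⁅star (L j), ⁅star (L i), X⁆⁆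
      + (1/2 : ℂ) • ∑ i, ∑ j, (starRingEnd ℂ (m i j)) • ⁅⁅X, L i⁆, L j⁆ := by
  intro X
  rw [h𝓛NM X, h𝓛 X]
  -- split the delta part
  have e1 : ∑ i, ∑ j, ((if i = j then (1:ℂ) else 0) + n j i) •
        (star (L i) * ⁅X, L j⁆ + ⁅star (L i), X⁆ * L j)
      = ((∑ k, star (L k) * ⁅X, L k⁆) + ∑ k, ⁅star (L k), X⁆ * L k)
        + ∑ i, ∑ j, n j i • (star (L i) * ⁅X, L j⁆ + ⁅star (L i), X⁆ * L j) := by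
    have e1' : ∀ i, ∑ j, ((if i = j then (1:ℂ) else 0) + n j i) •
        (star (L i) * ⁅X, L j⁆ + ⁅star (L i), X⁆ * L j)
        = (star (L i) * ⁅X, L i⁆ + ⁅star (L i), X⁆ * L i)
          + ∑ j, n j i • (star (L i) * ⁅X, L j⁆ + ⁅star (L i), X⁆ * L j) := by
      intro i
      simp [add_smul, Finset.sum_add_distrib, ite_smul, smul_add]
      abel
    calc ∑ i, ∑ j, ((if i = j then (1:ℂ) else 0) + n j i) •
          (star (L i) * ⁅X, L j⁆ + ⁅star (L i), X⁆ * L j)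
        = ∑ i, ((star (L i) * ⁅X, L i⁆ + ⁅star (L i), X⁆ * L i)
            + ∑ j, n j i • (star (L i) * ⁅X, L j⁆ + ⁅star (L i), X⁆ * L j)) :=
          Finset.sum_congr rfl fun i _ => e1' i
      _ = (∑ i, (star (L i) * ⁅X, L i⁆ + ⁅star (L i), X⁆ * L i))
            + ∑ i, ∑ j, n j i • (star (L i) * ⁅X, L j⁆ + ⁅star (L i), X⁆ * L j) :=
          Finset.sum_add_distrib
      _ = ((∑ k, star (L k) * ⁅X, L k⁆) + ∑ k, ⁅star (L k), X⁆ * L k)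
            + ∑ i, ∑ j, n j i • (star (L i) * ⁅X, L j⁆ + ⁅star (L i), X⁆ * L j) := by
          rw [Finset.sum_add_distrib]
  -- combine the two n-sums into the double-commutator correction
  have e2 : (∑ i, ∑ j, n j i • (star (L i) * ⁅X, L j⁆ + ⁅star (L i), X⁆ * L j))
      + ∑ i, ∑ j, n i j • (L i * ⁅X, star (L j)⁆ + ⁅L i, X⁆ * star (L j))
      = ∑ i, ∑ j, n j i • (⁅star (L i), ⁅X, L j⁆⁆ + ⁅⁅star (L i), X⁆, L j⁆) := by
    rw [Finset.sum_comm (f := fun i j => n i j • (L i * ⁅X, star (L j)⁆ + ⁅L i, X⁆ * star (L j)))]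
    rw [← Finset.sum_add_distrib]
    refine Finset.sum_congr rfl fun i _ => ?_
    rw [← Finset.sum_add_distrib]
    refine Finset.sum_congr rfl fun j _ => ?_
    rw [← smul_add]
    congr 1
    simp only [Ring.lie_def]
    noncomm_ring
  -- the m-sum
  have e3 : ∑ i, ∑ j, m i j •
        (star (L i) * ⁅X, star (L j)⁆ + ⁅star (L i), X⁆ * star (L j))
      = -∑ i, ∑ j, m i j • ⁅star (L j), ⁅star (L i), X⁆⁆ := by
    have s1 : ∑ i, ∑ j, m i j • (star (L i) * ⁅X, star (L j)⁆)
        = ∑ i, ∑ j, m i j • (star (L j) * ⁅X, star (L i)⁆) := by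
      rw [Finset.sum_comm]
      exact Finset.sum_congr rfl fun i _ => Finset.sum_congr rfl fun j _ => by rw [hm i j]
    calc ∑ i, ∑ j, m i j •
          (star (L i) * ⁅X, star (L j)⁆ + ⁅star (L i), X⁆ * star (L j))
        = (∑ i, ∑ j, m i j • (star (L i) * ⁅X, star (L j)⁆))
          + ∑ i, ∑ j, m i j • (⁅star (L i), X⁆ * star (L j)) := by
          simp [smul_add, Finset.sum_add_distrib]
      _ = (∑ i, ∑ j, m i j • (star (L j) * ⁅X, star (L i)⁆))
          + ∑ i, ∑ j, m i j • (⁅star (L i), X⁆ * star (L j)) := by rw [s1]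
      _ = -∑ i, ∑ j, m i j • ⁅star (L j), ⁅star (L i), X⁆⁆ := by
          rw [← Finset.sum_neg_distrib]
          rw [← Finset.sum_add_distrib]
          refine Finset.sum_congr rfl fun i _ => ?_
          rw [← Finset.sum_neg_distrib, ← Finset.sum_add_distrib]
          refine Finset.sum_congr rfl fun j _ => ?_
          rw [← smul_add, ← smul_neg]
          congr 1
          simp only [Ring.lie_def]
          noncomm_ring
  -- the conjugated m-sum
  have e4 : ∑ i, ∑ j, (starRingEnd ℂ (m j i)) • (L i * ⁅X, L j⁆ + ⁅L i, X⁆ * L j)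
      = -∑ i, ∑ j, (starRingEnd ℂ (m i j)) • ⁅⁅X, L i⁆, L j⁆ := by
    have s0 : ∀ i j, (starRingEnd ℂ (m j i)) = starRingEnd ℂ (m i j) := fun i j => by
      rw [hm j i]
    have s1 : ∑ i, ∑ j, (starRingEnd ℂ (m i j)) • (L i * ⁅X, L j⁆)
        = ∑ i, ∑ j, (starRingEnd ℂ (m i j)) • (L j * ⁅X, L i⁆) := by
      rw [Finset.sum_comm]
      exact Finset.sum_congr rfl fun i _ => Finset.sum_congr rfl fun j _ => by rw [s0 i j]
    calc ∑ i, ∑ j, (starRingEnd ℂ (m j i)) • (L i * ⁅X, L j⁆ + ⁅L i, X⁆ * L j)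
        = (∑ i, ∑ j, (starRingEnd ℂ (m i j)) • (L i * ⁅X, L j⁆))
          + ∑ i, ∑ j, (starRingEnd ℂ (m i j)) • (⁅L i, X⁆ * L j) := by
          simp [s0, smul_add, Finset.sum_add_distrib]
      _ = (∑ i, ∑ j, (starRingEnd ℂ (m i j)) • (L j * ⁅X, L i⁆))
          + ∑ i, ∑ j, (starRingEnd ℂ (m i j)) • (⁅L i, X⁆ * L j) := by rw [s1]
      _ = -∑ i, ∑ j, (starRingEnd ℂ (m i j)) • ⁅⁅X, L i⁆, L j⁆ := by
          rw [← Finset.sum_neg_distrib, ← Finset.sum_add_distrib]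
          refine Finset.sum_congr rfl fun i _ => ?_
          rw [← Finset.sum_neg_distrib, ← Finset.sum_add_distrib]
          refine Finset.sum_congr rfl fun j _ => ?_
          rw [← smul_add, ← smul_neg]
          congr 1
          simp only [Ring.lie_def]
          noncomm_ring
  rw [e1, e3, e4, ← e2]
  simp only [smul_add, smul_neg, sub_neg_eq_add]
  abel
end

section
/- Let L_{A,1}, …, L_{A,d} and L_{B,1}, …, L_{B,d} be bounded operators and H_A, H_B bounded self-adjoint operators on a complex Hilbert space (no commutativity among any of these operators is assumed). Define 𝓛_S X = (1/2) Σ_k L_{S,k}*[X, L_{S,k}] + (1/2) Σ_k [L_{S,k}*, X] L_{S,k} − i[X, H_S] for S = A, B. Then for every bounded operator X: 𝓛_A X + 𝓛_B X + Σ_k L_{A,k}*[X, L_{B,k}] + Σ_k [L_{B,k}*, X] L_{A,k} = (1/2) Σ_k (L_{A,k} + L_{B,k})*[X, L_{A,k} + L_{B,k}] + (1/2) Σ_k [(L_{A,k} + L_{B,k})*, X](L_{A,k} + L_{B,k}) − i[X, H_A + H_B + Im{ Σ_k L_{B,k}* L_{A,k} }]. Hence two components (I, L_A, H_A) and (I,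 L_B, H_B) in series are equivalent to the single component (I, L_A + L_B, H_A + H_B + Im{L_B* L_A}). -/
/-- The "imaginary part" `Im{C} = (C − C*)/(2i)` of a bounded operator. -/
noncomputable def opIm {𝓗 : Type*} [NormedAddCommGroup 𝓗] [InnerProductSpace ℂ 𝓗]
    [CompleteSpace 𝓗] (C : 𝓗 →L[ℂ] 𝓗) : 𝓗 →L[ℂ] 𝓗 :=
  (2 * Complex.I)⁻¹ • (C - star C)

/-- **The series product, no-scattering case.**
For components `(I, L_A, H_A)` and `(I, L_B, H_B)` (no commutativity assumed between any of the
operators), the open-loop Lindbladians plus the interconnection cross terms recombine into the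
Lindbladian of the single component
`(I, L_A + L_B, H_A + H_B + Im{L_B* L_A})` given by the series product. -/
theorem series_product_no_scattering
    {𝓗 : Type*} [NormedAddCommGroup 𝓗] [InnerProductSpace ℂ 𝓗] [CompleteSpace 𝓗]
    {d : ℕ} (LA LB : Fin d → 𝓗 →L[ℂ] 𝓗) (HA HB : 𝓗 →L[ℂ] 𝓗)
    (hHA : IsSelfAdjoint HA) (hHB : IsSelfAdjoint HB) :
    ∀ X : 𝓗 →L[ℂ] 𝓗,
      ((1/2 : ℂ) • ∑ k, star (LA k) * ⁅X, LA k⁆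
        + (1/2 : ℂ) • ∑ k, ⁅star (LA k), X⁆ * LA k - Complex.I • ⁅X, HA⁆)
      + ((1/2 : ℂ) • ∑ k, star (LB k) * ⁅X, LB k⁆
        + (1/2 : ℂ) • ∑ k, ⁅star (LB k), X⁆ * LB k - Complex.I • ⁅X, HB⁆)
      + ∑ k, star (LA k) * ⁅X, LB k⁆ + ∑ k, ⁅star (LB k), X⁆ * LA k
      = (1/2 : ℂ) • ∑ k, star (LA k + LB k) * ⁅X, LA k + LB k⁆
        + (1/2 : ℂ) • ∑ k, ⁅star (LA k + LB k), X⁆ * (LA k + LB k)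
        - Complex.I • ⁅X, HA + HB + opIm (∑ k, star (LB k) * LA k)⁆ := by
  intro X
  have h : Complex.I * (2 * Complex.I)⁻¹ = 1/2 := by
    field_simp
  simp only [opIm, lie_smul, smul_smul, h, Ring.lie_def, star_add, star_sum, star_mul, star_star,
    smul_sub, smul_add, mul_add, add_mul, sub_mul, mul_sub, Finset.sum_add_distrib,
    Finset.sum_sub_distrib, Finset.mul_sum, Finset.sum_mul, Finset.smul_sum, mul_assoc]
  simp only [mul_smul_comm, smul_mul_assoc, smul_smul, h, mul_assoc, ← Finset.smul_sum]
  module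
end

section
/- Let L_{A,1}, …, L_{A,d} and L_{B,1}, …, L_{B,d} be bounded operators on a complex Hilbert space and let n ≥ 0 be real. Then Im{ Σ_k ( (n+1) L_{B,k}* L_{A,k} + n L_{B,k} L_{A,k}* ) } = Im{ Σ_k L_{B,k}* L_{A,k} } + n · Im{ Σ_k [L_{B,k}*, L_{A,k}] }, where Im{C} = (C − C*)/(2i) and [A, B] = AB − BA. Consequently, naively applying the vacuum series product to the doubled (Araki–Woods) vacuum representation of a thermal field with mean photon number n, where the couplings L_S are replaced by the pairs (√(n+1) L_{S,k}, −√n L_{S,k}*), produces the Hamiltonian correction Im{L_B* L_A} + n Im{[L_B*, L_A]}, which carries a spurious state-dependent term n Im{[L_B*, L_A]} unless the coupling operators commute. -/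
/-- **The spurious state-dependent term from naively cascading in the doubled representation.**
For mean photon number `n ≥ 0`, replacing the couplings `L_S` by the pairs
`(√(n+1) L_{S,k}, −√n L_{S,k}*)` in the vacuum series product produces the Hamiltonian
correction
`Im{ Σ_k ((n+1) L_{B,k}* L_{A,k} + n L_{B,k} L_{A,k}*) }
  = Im{ Σ_k L_{B,k}* L_{A,k} } + n · Im{ Σ_k [L_{B,k}*, L_{A,k}] }`,
which carries the spurious state-dependent term `n Im{[L_B*, L_A]}` unless the coupling
operators commute. -/
theorem thermal_naive_series_spurious_term
    {𝓗 : Type*} [NormedAddCommGroup 𝓗] [InnerProductSpace ℂ 𝓗] [CompleteSpace 𝓗]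
    {d : ℕ} (LA LB : Fin d → 𝓗 →L[ℂ] 𝓗) (n : ℝ) (hn : 0 ≤ n) :
    opIm (∑ k, (((n : ℂ) + 1) • (star (LB k) * LA k) + (n : ℂ) • (LB k * star (LA k))))
      = opIm (∑ k, star (LB k) * LA k) + (n : ℂ) • opIm (∑ k, ⁅star (LB k), LA k⁆) := by
  have key : (∑ k, (((n : ℂ) + 1) • (star (LB k) * LA k) + (n : ℂ) • (LB k * star (LA k))))
      - star (∑ k, (((n : ℂ) + 1) • (star (LB k) * LA k) + (n : ℂ) • (LB k * star (LA k))))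
      = ((∑ k, star (LB k) * LA k) - star (∑ k, star (LB k) * LA k))
        + (n : ℂ) • ((∑ k, ⁅star (LB k), LA k⁆) - star (∑ k, ⁅star (LB k), LA k⁆)) := by
    simp only [star_sum, star_add, star_smul, star_mul, star_star, Ring.lie_def, star_sub,
      Complex.star_def, map_add, Complex.conj_ofReal, map_one, Finset.smul_sum,
      ← Finset.sum_sub_distrib, ← Finset.sum_add_distrib]
    apply Finset.sum_congr rfl
    intro k _
    module
  simp only [opIm, key, smul_add, smul_comm ((2 * Complex.I)⁻¹) ((n:ℂ))]
end

section
/- Let S_B be a unitary d×d complex matrix (a static beam-splitter), let L_{A,1}, …, L_{A,d} and L_{B,1}, …, L_{B,d} be bounded operators and H_A, H_B bounded self-adjoint operators on a complex Hilbert space. Define 𝓛_S X = (1/2) Σ_k L_{S,k}*[X, L_{S,k}] + (1/2) Σ_k [L_{S,k}*, X] L_{S,k} − i[X, H_S] for S = A, B, and set L_k = Σ_j (S_B)_{kj} L_{A,j} + L_{B,k} (that is, L = S_B L_A + L_B). Then for every bounded operator X: 𝓛_A X + 𝓛_B X + Σ_{j,k} L_{A,j}* conj((S_B)_{kj}) [X,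 L_{B,k}] + Σ_{j,k} [L_{B,j}*, X] (S_B)_{jk} L_{A,k} = (1/2) Σ_k L_k*[X, L_k] + (1/2) Σ_k [L_k*, X] L_k − i[X, H_A + H_B + Im{ Σ_{j,k} L_{B,j}* (S_B)_{jk} L_{A,k} }]. -/
open scoped Matrix

section aux
variable {R : Type*} [Ring R] [Algebra ℂ R]

lemma bs_lie_mul (X a b : R) : ⁅X, a * b⁆ = a * ⁅X, b⁆ - ⁅a, X⁆ * b := by
  simp only [Ring.lie_def]; noncomm_ring

lemma bs_key {d : ℕ} (M : Matrix (Fin d) (Fin d) ℂ) (hM : Mᴴ * M = 1)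
    (u v p q : Fin d → R) :
    ∑ k, ((∑ j, (star (M k j)) • u j) + p k) * ((∑ j, M k j • v j) + q k)
      = (∑ j, u j * v j) + (∑ k, ∑ j, (star (M k j)) • (u j * q k))
        + ((∑ k, ∑ j, M k j • (p k * v j)) + ∑ k, p k * q k) := by
  have hδ : ∀ a b : Fin d, (∑ k, star (M k a) * M k b) = if a = b then (1:ℂ) else 0 := by
    intro a b
    calc ∑ k, star (M k a) * M k b = (Mᴴ * M) a b := by
          simp [Matrix.mul_apply, Matrix.conjTranspose_apply]
      _ = (1 : Matrix (Fin d) (Fin d) ℂ) a b := by rw [hM]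
      _ = _ := Matrix.one_apply
  have e1 : ∑ k, (∑ j, (star (M k j)) • u j) * (∑ j, M k j • v j) = ∑ j, u j * v j := by
    calc ∑ k, (∑ j, (star (M k j)) • u j) * (∑ j, M k j • v j)
        = ∑ k, ∑ j, ∑ j', (star (M k j) * M k j') • (u j * v j') := by
          refine Finset.sum_congr rfl fun k _ => ?_
          rw [Finset.sum_mul]
          refine Finset.sum_congr rfl fun j _ => ?_
          rw [smul_mul_assoc, Finset.mul_sum]
          simp [mul_smul_comm, smul_smul, Finset.smul_sum]
      _ = ∑ j, ∑ k, ∑ j', (star (M k j) * M k j') • (u j * v j') := Finset.sum_comm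
      _ = ∑ j, u j * v j := by
          refine Finset.sum_congr rfl fun j _ => ?_
          rw [Finset.sum_comm]
          calc ∑ j', ∑ k, (star (M k j) * M k j') • (u j * v j')
              = ∑ j', (∑ k, star (M k j) * M k j') • (u j * v j') := by
                simp [Finset.sum_smul]
            _ = ∑ j', (if j = j' then (1:ℂ) else 0) • (u j * v j') := by
                refine Finset.sum_congr rfl fun j' _ => ?_; rw [hδ]
            _ = u j * v j := by simp [ite_smul]
  have e2 : ∑ k, (∑ j, (star (M k j)) • u j) * q k
      = ∑ k, ∑ j, (star (M k j)) • (u j * q k) := by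
    refine Finset.sum_congr rfl fun k _ => ?_
    rw [Finset.sum_mul]; simp [smul_mul_assoc]
  have e3 : ∑ k, p k * (∑ j, M k j • v j)
      = ∑ k, ∑ j, M k j • (p k * v j) := by
    refine Finset.sum_congr rfl fun k _ => ?_
    rw [Finset.mul_sum]; simp [mul_smul_comm]
  simp only [add_mul, mul_add, Finset.sum_add_distrib]
  rw [e1, e2, e3]; abel

end aux

section aux2
variable {R : Type*} [Ring R]

lemma bs_lie_sum {ι : Type*} (s : Finset ι) (x : R) (f : ι → R) :
    ⁅x, ∑ i ∈ s, f i⁆ = ∑ i ∈ s, ⁅x, f i⁆ := by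
  simp [Ring.lie_def, Finset.mul_sum, Finset.sum_mul, Finset.sum_sub_distrib]

lemma bs_sum_lie {ι : Type*} (s : Finset ι) (x : R) (f : ι → R) :
    ⁅∑ i ∈ s, f i, x⁆ = ∑ i ∈ s, ⁅f i, x⁆ := by
  simp [Ring.lie_def, Finset.mul_sum, Finset.sum_mul, Finset.sum_sub_distrib]

lemma bs_lie_add (x a b : R) : ⁅x, a + b⁆ = ⁅x, a⁆ + ⁅x, b⁆ := by
  simp only [Ring.lie_def]; noncomm_ring

lemma bs_add_lie (x a b : R) : ⁅a + b, x⁆ = ⁅a, x⁆ + ⁅b, x⁆ := by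
  simp only [Ring.lie_def]; noncomm_ring

lemma bs_lie_sub (x a b : R) : ⁅x, a - b⁆ = ⁅x, a⁆ - ⁅x, b⁆ := by
  simp only [Ring.lie_def]; noncomm_ring

lemma bs_lie_smul [Algebra ℂ R] (c : ℂ) (x a : R) : ⁅x, c • a⁆ = c • ⁅x, a⁆ := by
  simp only [Ring.lie_def, mul_smul_comm, smul_mul_assoc, smul_sub]

lemma bs_smul_lie [Algebra ℂ R] (c : ℂ) (x a : R) : ⁅c • a, x⁆ = c • ⁅a, x⁆ := by
  simp only [Ring.lie_def, mul_smul_comm, smul_mul_assoc, smul_sub]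

end aux2

/-- **The series product with a static beam-splitter.**
Let `S_B` be a unitary `d × d` complex matrix, `L_A, L_B` bounded couplings, `H_A, H_B` bounded
self-adjoint, and `L = S_B L_A + L_B`.  Then the open-loop Lindbladians plus the interconnection
cross terms recombine into the Lindbladian with coupling `L` and Hamiltonian
`H_A + H_B + Im{L_B* S_B L_A}`, as predicted by the series product. -/
theorem series_product_with_static_beamsplitter
    {𝓗 : Type*} [NormedAddCommGroup 𝓗] [InnerProductSpace ℂ 𝓗] [CompleteSpace 𝓗]
    {d : ℕ} (SB : Matrix (Fin d) (Fin d) ℂ) (hSB1 : SBᴴ * SB = 1) (hSB2 : SB * SBᴴ = 1)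
    (LA LB : Fin d → 𝓗 →L[ℂ] 𝓗) (HA HB : 𝓗 →L[ℂ] 𝓗)
    (hHA : IsSelfAdjoint HA) (hHB : IsSelfAdjoint HB)
    (L : Fin d → 𝓗 →L[ℂ] 𝓗)
    (hL : ∀ k, L k = (∑ j, SB k j • LA j) + LB k) :
    ∀ X : 𝓗 →L[ℂ] 𝓗,
      ((1/2 : ℂ) • ∑ k, star (LA k) * ⁅X, LA k⁆
        + (1/2 : ℂ) • ∑ k, ⁅star (LA k), X⁆ * LA k - Complex.I • ⁅X, HA⁆)
      + ((1/2 : ℂ) • ∑ k, star (LB k) * ⁅X, LB k⁆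
        + (1/2 : ℂ) • ∑ k, ⁅star (LB k), X⁆ * LB k - Complex.I • ⁅X, HB⁆)
      + ∑ j, ∑ k, starRingEnd ℂ (SB k j) • (star (LA j) * ⁅X, LB k⁆)
      + ∑ j, ∑ k, SB j k • (⁅star (LB j), X⁆ * LA k)
      = (1/2 : ℂ) • ∑ k, star (L k) * ⁅X, L k⁆
        + (1/2 : ℂ) • ∑ k, ⁅star (L k), X⁆ * L k
        - Complex.I • ⁅X, HA + HB
            + opIm (∑ j, ∑ k, SB j k • (star (LB j) * LA k))⁆ := by
  
  intro X
  simp only [starRingEnd_apply]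
  set T : 𝓗 →L[ℂ] 𝓗 := ∑ j, ∑ k, SB j k • (star (LB j) * LA k) with hT
  have hstarL : ∀ k, star (L k) = (∑ j, star (SB k j) • star (LA j)) + star (LB k) := by
    intro k; rw [hL]; simp [star_sum, star_smul]
  have hlie1 : ∀ k, ⁅X, L k⁆ = (∑ j, SB k j • ⁅X, LA j⁆) + ⁅X, LB k⁆ := by
    intro k; rw [hL, bs_lie_add, bs_lie_sum]
    simp [bs_lie_smul]
  have hlie2 : ∀ k, ⁅star (L k), X⁆
      = (∑ j, star (SB k j) • ⁅star (LA j), X⁆) + ⁅star (LB k), X⁆ := by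
    intro k; rw [hstarL, bs_add_lie, bs_sum_lie]
    simp [bs_smul_lie]
  have h1 : ∑ k, star (L k) * ⁅X, L k⁆
      = (∑ j, star (LA j) * ⁅X, LA j⁆)
        + (∑ k, ∑ j, star (SB k j) • (star (LA j) * ⁅X, LB k⁆))
        + ((∑ k, ∑ j, SB k j • (star (LB k) * ⁅X, LA j⁆))
          + ∑ k, star (LB k) * ⁅X, LB k⁆) := by
    simp only [hstarL, hlie1]
    exact bs_key SB hSB1 (fun j => star (LA j)) (fun j => ⁅X, LA j⁆)
      (fun k => star (LB k)) (fun k => ⁅X, LB k⁆)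
  have h2 : ∑ k, ⁅star (L k), X⁆ * L k
      = (∑ j, ⁅star (LA j), X⁆ * LA j)
        + (∑ k, ∑ j, star (SB k j) • (⁅star (LA j), X⁆ * LB k))
        + ((∑ k, ∑ j, SB k j • (⁅star (LB k), X⁆ * LA j))
          + ∑ k, ⁅star (LB k), X⁆ * LB k) := by
    simp only [hlie2]
    simp only [hL]
    exact bs_key SB hSB1 (fun j => ⁅star (LA j), X⁆) (fun j => LA j)
      (fun k => ⁅star (LB k), X⁆) (fun k => LB k)
  have hTstar : star T = ∑ j, ∑ k, star (SB j k) • (star (LA k) * LB j) := by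
    rw [hT]
    simp [star_sum, star_smul, star_mul]
  have h3 : ⁅X, star T⁆ = (∑ k, ∑ j, star (SB k j) • (star (LA j) * ⁅X, LB k⁆))
      - ∑ k, ∑ j, star (SB k j) • (⁅star (LA j), X⁆ * LB k) := by
    rw [hTstar]
    rw [bs_lie_sum]
    simp only [bs_lie_sum, bs_lie_smul, bs_lie_mul, smul_sub]
    rw [← Finset.sum_sub_distrib]
    refine Finset.sum_congr rfl fun k _ => ?_
    rw [← Finset.sum_sub_distrib]
  have h4 : ⁅X, T⁆ = (∑ k, ∑ j, SB k j • (star (LB k) * ⁅X, LA j⁆))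
      - ∑ k, ∑ j, SB k j • (⁅star (LB k), X⁆ * LA j) := by
    rw [hT]
    rw [bs_lie_sum]
    simp only [bs_lie_sum, bs_lie_smul, bs_lie_mul, smul_sub]
    rw [← Finset.sum_sub_distrib]
    refine Finset.sum_congr rfl fun k _ => ?_
    rw [← Finset.sum_sub_distrib]
  have hI : Complex.I * (2 * Complex.I)⁻¹ = 1/2 := by
    rw [mul_inv, Complex.inv_I]
    have : Complex.I * ((2:ℂ)⁻¹ * -Complex.I) = -(Complex.I * Complex.I) * (2:ℂ)⁻¹ := by ring
    rw [this, Complex.I_mul_I]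
    norm_num
  have hH : Complex.I • ⁅X, HA + HB + opIm T⁆
      = Complex.I • ⁅X, HA⁆ + Complex.I • ⁅X, HB⁆
        + (1/2:ℂ) • (⁅X, T⁆ - ⁅X, star T⁆) := by
    rw [bs_lie_add, bs_lie_add, opIm, bs_lie_smul, bs_lie_sub, smul_add, smul_add, smul_smul, hI]
  have hC1 : ∑ j, ∑ k, star (SB k j) • (star (LA j) * ⁅X, LB k⁆)
      = ∑ k, ∑ j, star (SB k j) • (star (LA j) * ⁅X, LB k⁆) := Finset.sum_comm
  rw [h1, h2, hC1, hH, h3, h4]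
  module
end
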